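/- Let r ≥ 1 and l ≥ r be integers, 1 ≤ k ≤ r, a₁ ∈ ℝ, ε ∈ {-1,1}, and let g(a) = (a-a₁)^r. Then on the set {a ∈ ℝ : ε(a-a₁) > 0}, the function x_k(a) = (ε(a-a₁))^{1/2−k} satisfies (Op_l[g] x_k)(a) = 0. -/

import Mathlib

open Polynomial

/-- The Pochhammer symbol `(1/2)_s`. -/
noncomputable def poch (s : ℕ) : ℝ := (ascPochhammer ℝ s).eval (1/2 : ℝ)

/-- The operator `Op_n[F]` acting on `h`:
`(Op_n[F]h)(a) = ∑_{s=0}^{n} F^{(n-s)}(a)/(n-s)! · h^{(s)}(a)/(1/2)_s`. -/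
noncomputable def Op (n : ℕ) (F h : ℝ → ℝ) (a : ℝ) : ℝ :=
  ∑ s ∈ Finset.range (n + 1),
    iteratedDeriv (n - s) F a / (Nat.factorial (n - s) : ℝ) *
      (iteratedDeriv s h a / poch s)

/-- descending factorial `x(x-1)⋯(x-n+1)` -/
noncomputable def dp : ℕ → ℝ → ℝ
  | 0, _ => 1
  | n+1, x => dp n x * (x - n)

lemma dp_zero (x : ℝ) : dp 0 x = 1 := rfl
lemma dp_succ (n : ℕ) (x : ℝ) : dp (n+1) x = dp n x * (x - n) := rfl

lemma dp_add (m n : ℕ) (x : ℝ) : dp (m + n) x = dp m x * dp n (x - m) := by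
  induction n with
  | zero => simp [dp]
  | succ n ih =>
    have h : m + (n+1) = (m+n) + 1 := rfl
    rw [h, dp_succ, ih, dp_succ]
    push_cast
    ring

lemma dp_pos {n : ℕ} {x : ℝ} (h : ∀ i : ℕ, i < n → (i:ℝ) < x) : 0 < dp n x := by
  induction n with
  | zero => norm_num [dp_zero]
  | succ n ih =>
    rw [dp_succ]
    have h1 : 0 < dp n x := ih (fun i hi => h i (by omega))
    have h2 : (n:ℝ) < x := h n (by omega)
    have : 0 < x - n := by linarith
    positivity

lemma poch_eq (n : ℕ) : poch n = dp n ((n:ℝ) - 1/2) := by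
  induction n with
  | zero => simp [poch, dp_zero]
  | succ n ih =>
    have h1 : poch (n+1) = poch n * (1/2 + n) := by
      simp [poch, ascPochhammer_succ_eval]
    have h2 : dp (n+1) (((n:ℝ)+1) - 1/2) = ((n:ℝ)+1-1/2) * dp n ((n:ℝ) - 1/2) := by
      rw [show n+1 = 1 + n from by omega, dp_add]
      push_cast
      rw [dp_succ, dp_zero]
      ring_nf
    rw [h1, ih]
    push_cast [h2]
    ring

lemma dp_nat_zero {n r : ℕ} (h : n < r) : dp r ((n:ℝ)) = 0 := by
  have hr : r = (n+1) + (r - (n+1)) := by omega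
  rw [hr, dp_add, dp_succ]
  simp

lemma vand (r : ℕ) (x y : ℝ) :
    ∑ j ∈ Finset.range (r+1), (r.choose j : ℝ) * dp j x * dp (r-j) y = dp r (x+y) := by
  induction r with
  | zero => simp [dp_zero]
  | succ r ih =>
    have peel : ∑ j ∈ Finset.range (r+2), ((r+1).choose j : ℝ) * dp j x * dp (r+1-j) y
        = (1 : ℝ) * dp 0 x * dp (r+1) y
          + ∑ i ∈ Finset.range (r+1), ((r+1).choose (i+1) : ℝ) * dp (i+1) x * dp (r-i) y := by
      rw [Finset.sum_range_succ' (fun j => ((r+1).choose j : ℝ) * dp j x * dp (r+1-j) y) (r+1)]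
      simp [add_comm]
    have pascal : ∀ i ∈ Finset.range (r+1),
        ((r+1).choose (i+1) : ℝ) * dp (i+1) x * dp (r-i) y
        = (r.choose i : ℝ) * dp (i+1) x * dp (r-i) y
          + (r.choose (i+1) : ℝ) * dp (i+1) x * dp (r-i) y := by
      intro i _
      rw [Nat.choose_succ_succ]
      push_cast
      ring
    have second : (1 : ℝ) * dp 0 x * dp (r+1) y
        + ∑ i ∈ Finset.range (r+1), (r.choose (i+1) : ℝ) * dp (i+1) x * dp (r-i) y
        = ∑ j ∈ Finset.range (r+1), (r.choose j : ℝ) * dp j x * dp (r+1-j) y := by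
      have h := Finset.sum_range_succ' (fun j => (r.choose j : ℝ) * dp j x * dp (r+1-j) y) (r+1)
      rw [Finset.sum_range_succ (fun j => (r.choose j : ℝ) * dp j x * dp (r+1-j) y) (r+1)] at h
      simp only [Nat.succ_sub_succ, Nat.choose_succ_self, Nat.cast_zero, zero_mul, mul_zero,
        add_zero, Nat.choose_zero_right, Nat.cast_one, one_mul, dp_zero, Nat.sub_zero] at h ⊢
      linarith [h]
    have split : ∀ j ∈ Finset.range (r+1),
        (r.choose j : ℝ) * dp (j+1) x * dp (r-j) y + (r.choose j : ℝ) * dp j x * dp (r+1-j) y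
        = ((r.choose j : ℝ) * dp j x * dp (r-j) y) * (x + y - r) := by
      intro j hj
      have hjr : j ≤ r := Nat.lt_succ_iff.mp (Finset.mem_range.mp hj)
      have h1 : r + 1 - j = (r - j) + 1 := by omega
      rw [dp_succ, h1, dp_succ]
      have h2 : ((r - j : ℕ) : ℝ) = (r:ℝ) - j := by
        push_cast [Nat.cast_sub hjr]; ring
      rw [h2]
      ring
    have key : (∑ j ∈ Finset.range (r+1), (r.choose j : ℝ) * dp (j+1) x * dp (r-j) y)
        + ∑ j ∈ Finset.range (r+1), (r.choose j : ℝ) * dp j x * dp (r+1-j) y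
        = dp (r+1) (x+y) := by
      rw [← Finset.sum_add_distrib, Finset.sum_congr rfl split, ← Finset.sum_mul, ih, dp_succ]
    rw [peel, Finset.sum_congr rfl pascal, Finset.sum_add_distrib]
    linarith [second, key]

lemma iter_g (r : ℕ) (a₁ : ℝ) :
    ∀ m : ℕ, ∀ a : ℝ, iteratedDeriv m (fun u : ℝ => (u - a₁)^r) a
      = (r.descFactorial m : ℝ) * (a - a₁)^(r - m) := by
  intro m
  induction m with
  | zero => intro a; simp
  | succ m ih =>
    intro a
    rw [iteratedDeriv_succ]
    have hfe : iteratedDeriv m (fun u : ℝ => (u - a₁)^r)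
        = fun a => (r.descFactorial m : ℝ) * (a - a₁)^(r - m) := funext ih
    rw [hfe]
    have hd : HasDerivAt (fun a : ℝ => (r.descFactorial m : ℝ) * (a - a₁)^(r - m))
        ((r.descFactorial m : ℝ) * (((r - m : ℕ) : ℝ) * (a - a₁)^(r - m - 1) * 1)) a :=
      (((hasDerivAt_id a).sub_const a₁).pow (r-m)).const_mul _
    rw [hd.deriv, Nat.descFactorial_succ]
    have : r - m - 1 = r - (m+1) := by omega
    rw [this]
    push_cast
    ring

lemma iter_h (a₁ ε : ℝ) (hε : ε = 1 ∨ ε = -1) (α : ℝ) :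
    ∀ s : ℕ, ∀ a : ℝ, 0 < ε * (a - a₁) →
      iteratedDeriv s (fun u : ℝ => (ε * (u - a₁)) ^ α) a
        = ε^s * dp s α * (ε * (a - a₁)) ^ (α - s) := by
  intro s
  induction s with
  | zero => intro a _; simp [dp_zero]
  | succ s ih =>
    intro a ha
    rw [iteratedDeriv_succ]
    have hopen : IsOpen {u : ℝ | 0 < ε * (u - a₁)} :=
      isOpen_lt continuous_const (by fun_prop)
    have hev : iteratedDeriv s (fun u : ℝ => (ε * (u - a₁)) ^ α)
        =ᶠ[nhds a] fun u => ε^s * dp s α * (ε * (u - a₁)) ^ (α - s) :=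
      Filter.eventuallyEq_of_mem (hopen.mem_nhds ha) (fun u hu => ih u hu)
    rw [hev.deriv_eq]
    have hin : HasDerivAt (fun u : ℝ => ε * (u - a₁)) ε a := by
      simpa using ((hasDerivAt_id a).sub_const a₁).const_mul ε
    have hne : ε * (a - a₁) ≠ 0 := ne_of_gt ha
    have hrp : HasDerivAt (fun u : ℝ => (ε * (u - a₁)) ^ (α - s))
        ((α - s) * (ε * (a - a₁)) ^ (α - s - 1) * ε) a :=
      by have := (Real.hasDerivAt_rpow_const (p := α - s) (Or.inl hne)).comp a hin; exact this
    rw [(hrp.const_mul (ε^s * dp s α)).deriv, dp_succ]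
    have harg : α - ((s+1 : ℕ) : ℝ) = α - s - 1 := by push_cast; ring
    rw [harg]
    ring

/-- For integers `r ≥ 1`, `l ≥ r`, `1 ≤ k ≤ r`, `a₁ ∈ ℝ`, `ε ∈ {±1}`,
and `g(a) = (a-a₁)^r`, the function `x_k(a) = (ε(a-a₁))^{1/2−k}` satisfies
`(Op_l[g] x_k)(a) = 0` on `{a : ε(a-a₁) > 0}`. -/
theorem stmt15 (r l k : ℕ) (hr : 1 ≤ r) (hl : r ≤ l) (hk1 : 1 ≤ k) (hkr : k ≤ r)
    (a₁ ε : ℝ) (hε : ε = 1 ∨ ε = -1) :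
    ∀ a : ℝ, 0 < ε * (a - a₁) →
      Op l (fun u => (u - a₁) ^ r)
        (fun u => (ε * (u - a₁)) ^ ((1/2 : ℝ) - (k : ℝ))) a = 0 := by
  intro a ha
  set α : ℝ := (1/2 : ℝ) - (k : ℝ) with hαdef
  obtain ⟨x, hxdef⟩ : ∃ x : ℝ, x = (l : ℝ) - 1/2 := ⟨_, rfl⟩
  obtain ⟨y, hydef⟩ : ∃ y : ℝ, y = α - (l : ℝ) + r := ⟨_, rfl⟩
  have hε2 : ε ^ 2 = 1 := by rcases hε with h | h <;> rw [h] <;> norm_num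
  have hXpos : 0 < dp r x := dp_pos (by
    intro i hi
    have h1 : (i:ℝ) + 1 ≤ r := by exact_mod_cast hi
    have h2 : (r:ℝ) ≤ l := by exact_mod_cast hl
    rw [hxdef]; linarith)
  have hPpos : 0 < poch (l - r) := ascPochhammer_pos _ _ (by norm_num)
  set K : ℝ := ε^(r+l) * (ε * (a - a₁))^(α + (r:ℝ) - l) * dp (l-r) α / (poch (l-r) * dp r x) with hKdef
  have main : ∀ s ∈ Finset.range (l+1),
      iteratedDeriv (l-s) (fun u : ℝ => (u - a₁)^r) a / ((l-s).factorial : ℝ) *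
        (iteratedDeriv s (fun u : ℝ => (ε * (u - a₁)) ^ α) a / poch s)
      = K * ((r.choose (l-s) : ℝ) * dp (l-s) x * dp (r-(l-s)) y) := by
    intro s hs
    have hsl : s ≤ l := Nat.lt_succ_iff.mp (Finset.mem_range.mp hs)
    rw [iter_g r a₁ (l-s) a, iter_h a₁ ε hε α s a ha]
    by_cases hcase : r < l - s
    · rw [Nat.descFactorial_eq_zero_iff_lt.mpr hcase, Nat.choose_eq_zero_of_lt hcase]
      simp
    · push_neg at hcase
      have hjr : l - s ≤ r := hcase
      -- notation
      have hUpos : 0 < dp (r-(l-s)) (x - ((l-s : ℕ) : ℝ)) := dp_pos (by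
        intro i hi
        have h1 : (i:ℝ) + 1 ≤ ((r - (l-s) : ℕ) : ℝ) := by exact_mod_cast hi
        rw [Nat.cast_sub hjr] at h1
        have h2 : (r:ℝ) ≤ l := by exact_mod_cast hl
        rw [hxdef]; linarith)
      have hJpos : 0 < dp (l-s) x := dp_pos (by
        intro i hi
        have h1 : (i:ℝ) + 1 ≤ ((l - s : ℕ) : ℝ) := by exact_mod_cast hi
        have h2 : ((l - s : ℕ) : ℝ) ≤ l := by
          rw [Nat.cast_sub hsl]
          have h3 : (0:ℝ) ≤ s := Nat.cast_nonneg s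
          linarith
        rw [hxdef]; linarith)
      -- decompositions
      have h3 : dp s α = dp (l-r) α * dp (r-(l-s)) y := by
        conv_lhs => rw [show s = (l-r) + (r-(l-s)) from by omega]
        rw [dp_add]
        congr 1
        rw [Nat.cast_sub hl, hydef]
        ring_nf
      have h4 : poch s = dp (r-(l-s)) (x - ((l-s : ℕ) : ℝ)) * poch (l-r) := by
        rw [poch_eq s, poch_eq (l-r)]
        conv_lhs => rw [show s = (r-(l-s)) + (l-r) from by omega]
        rw [dp_add]
        congr 1
        · congr 1
          rw [Nat.cast_add, Nat.cast_sub hjr, Nat.cast_sub hl, Nat.cast_sub hsl, hxdef]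
          ring
        · congr 1
          rw [Nat.cast_add, Nat.cast_sub hjr, Nat.cast_sub hl, Nat.cast_sub hsl]
          push_cast [Nat.cast_sub hjr]
          ring
      have h5 : dp r x = dp (l-s) x * dp (r-(l-s)) (x - ((l-s : ℕ) : ℝ)) := by
        conv_lhs => rw [show r = (l-s) + (r-(l-s)) from by omega]
        rw [dp_add]
      -- powers of ε and t
      have hεpow : ε^(r+l) = ε^(r-(l-s)) * ε^s := by
        rw [← pow_add, show r + l = (r-(l-s)+s) + 2*(l-s) from by omega,
          pow_add, pow_mul, hε2, one_pow, mul_one]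
      have hbase : ε * (ε * (a - a₁)) = a - a₁ := by
        rw [← mul_assoc, ← sq, hε2, one_mul]
      have hpow : (a - a₁)^(r-(l-s)) = ε^(r-(l-s)) * (ε*(a-a₁))^(r-(l-s)) := by
        rw [← mul_pow, hbase]
      have htt : (ε * (a - a₁)) ^ (α + (r:ℝ) - l)
          = ((ε * (a - a₁))^(r-(l-s)) : ℝ) * (ε * (a - a₁))^(α - (s:ℝ)) := by
        rw [← Real.rpow_natCast (ε * (a - a₁)) (r-(l-s)), ← Real.rpow_add ha]
        congr 1
        rw [Nat.cast_sub hjr, Nat.cast_sub hsl]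
        ring
      rw [Nat.descFactorial_eq_factorial_mul_choose, hpow, h3, h4, hKdef, h5, hεpow, htt]
      have hf : ((l-s).factorial : ℝ) ≠ 0 := by positivity
      have hU : dp (r-(l-s)) (x - ((l-s : ℕ) : ℝ)) ≠ 0 := ne_of_gt hUpos
      have hP : poch (l-r) ≠ 0 := ne_of_gt hPpos
      have hJ : dp (l-s) x ≠ 0 := ne_of_gt hJpos
      rw [div_mul_div_comm, div_mul_eq_mul_div,
        div_eq_div_iff (mul_ne_zero hf (mul_ne_zero hU hP))
          (mul_ne_zero hP (mul_ne_zero hJ hU))]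
      push_cast
      ring
  unfold Op
  rw [Finset.sum_congr rfl main, ← Finset.mul_sum]
  have reflect : ∑ s ∈ Finset.range (l+1),
      ((r.choose (l-s) : ℝ) * dp (l-s) x * dp (r-(l-s)) y)
      = ∑ j ∈ Finset.range (l+1), ((r.choose j : ℝ) * dp j x * dp (r-j) y) := by
    have := Finset.sum_range_reflect (fun j => (r.choose j : ℝ) * dp j x * dp (r-j) y) (l+1)
    simpa using this
  rw [reflect]
  have trunc : ∑ j ∈ Finset.range (l+1), ((r.choose j : ℝ) * dp j x * dp (r-j) y)
      = ∑ j ∈ Finset.range (r+1), ((r.choose j : ℝ) * dp j x * dp (r-j) y) := by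
    symm
    apply Finset.sum_subset
    · exact Finset.range_subset_range.mpr (by omega)
    · intro j _ hj
      have : r < j := by
        rcases Nat.lt_or_ge r j with h | h
        · exact h
        · exact absurd (Finset.mem_range.mpr (by omega)) hj
      rw [Nat.choose_eq_zero_of_lt this]
      simp
  rw [trunc, vand]
  have hxy : x + y = ((r - k : ℕ) : ℝ) := by
    rw [hxdef, hydef, hαdef, Nat.cast_sub hkr]
    ring
  rw [hxy, dp_nat_zero (show r - k < r from by omega), mul_zero]
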